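/- Let T = {(x,y) ∈ ℝ² : 0 < x, 0 < y, x + y < 1} and write z = 1 − x − y. Define the projective Cassaigne map f : T → T (almost everywhere) by: f(x,y) = ((x−z)/(x+y), z/(x+y)) if x > z, and f(x,y) = (y/(1−x), x/(1−x)) if x < z. Let μ be the measure on ℝ² obtained by restricting Lebesgue measure to T and taking the density (x,y) ↦ 1/(2(1−x)(x+y)). Then the pushforward of μ under f equals μ; i.e. the density of the invariant measure of the projective Cassaigne algorithm on the unit simplex is proportional to 1/((1−x)(1−z)). -/

import Mathlib

open MeasureTheory Set

/-- The open unit simplex `T = {(x,y) : 0 < x, 0 < y, x + y < 1}` in the plane. -/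
def simplexT : Set (ℝ × ℝ) := {p | 0 < p.1 ∧ 0 < p.2 ∧ p.1 + p.2 < 1}

/-- The projective Cassaigne map in the coordinates `(x,y)`, with `z = 1 - x - y`:
`f(x,y) = ((x-z)/(x+y), z/(x+y))` if `x > z` and `f(x,y) = (y/(1-x), x/(1-x))` if `x < z`. -/
noncomputable def casProj : ℝ × ℝ → ℝ × ℝ := fun p =>
  if 1 - p.1 - p.2 < p.1 then
    ((p.1 - (1 - p.1 - p.2)) / (p.1 + p.2), (1 - p.1 - p.2) / (p.1 + p.2))
  else (p.2 / (1 - p.1), p.1 / (1 - p.1))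

/-- Lebesgue measure restricted to `T` with density `1/(2(1-x)(x+y))`. -/
noncomputable def casMeasure : Measure (ℝ × ℝ) :=
  (volume.restrict simplexT).withDensity fun p =>
    ENNReal.ofReal (1 / (2 * (1 - p.1) * (p.1 + p.2)))

/-! ### Auxiliary definitions -/

/-- The density of `casMeasure`. -/
noncomputable def casDen : ℝ × ℝ → ENNReal := fun p =>
  ENNReal.ofReal (1 / (2 * (1 - p.1) * (p.1 + p.2)))

/-- Inverse of the first branch of the Cassaigne map. -/
noncomputable def g1 : ℝ × ℝ → ℝ × ℝ := fun q =>
  ((q.1 + q.2) / (1 + q.2), (1 - q.1 - q.2) / (1 + q.2))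

/-- Inverse of the second branch of the Cassaigne map. -/
noncomputable def g2 : ℝ × ℝ → ℝ × ℝ := fun q => (q.2 / (1 + q.2), q.1 / (1 + q.2))

/-- A `2 × 2` matrix as a continuous linear map on `ℝ × ℝ`. -/
noncomputable def mk2 (a b c d : ℝ) : ℝ × ℝ →L[ℝ] ℝ × ℝ :=
  ((a • ContinuousLinearMap.fst ℝ ℝ ℝ + b • ContinuousLinearMap.snd ℝ ℝ ℝ).prod
   (c • ContinuousLinearMap.fst ℝ ℝ ℝ + d • ContinuousLinearMap.snd ℝ ℝ ℝ))

lemma mk2_apply (a b c d : ℝ) (q : ℝ × ℝ) :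
    mk2 a b c d q = (a * q.1 + b * q.2, c * q.1 + d * q.2) := by
  simp [mk2, smul_eq_mul]

lemma mk2_det (a b c d : ℝ) : (mk2 a b c d).det = a * d - b * c := by
  have h : LinearMap.toMatrix (Module.Basis.finTwoProd ℝ) (Module.Basis.finTwoProd ℝ)
      (mk2 a b c d : ℝ × ℝ →ₗ[ℝ] ℝ × ℝ) = !![a, b; c, d] := by
    ext i j
    fin_cases i <;> fin_cases j <;>
      simp [LinearMap.toMatrix_apply, Module.Basis.finTwoProd, mk2_apply]
  rw [ContinuousLinearMap.det, ← LinearMap.det_toMatrix (Module.Basis.finTwoProd ℝ), h,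
    Matrix.det_fin_two_of]

/-- Jacobian matrix of `g1`. -/
noncomputable def fder1 : ℝ × ℝ → ℝ × ℝ →L[ℝ] ℝ × ℝ := fun p =>
  mk2 (1/(1+p.2)) ((1-p.1)/(1+p.2)^2) (-1/(1+p.2)) ((p.1-2)/(1+p.2)^2)

/-- Jacobian matrix of `g2`. -/
noncomputable def fder2 : ℝ × ℝ → ℝ × ℝ →L[ℝ] ℝ × ℝ := fun p =>
  mk2 0 (1/(1+p.2)^2) (1/(1+p.2)) (-p.1/(1+p.2)^2)

lemma hasFDerivAt_g1 (p : ℝ × ℝ) (h : (1:ℝ) + p.2 ≠ 0) :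
    HasFDerivAt g1 (fder1 p) p := by
  have h2 : HasFDerivAt (fun q : ℝ × ℝ => 1 + q.2)
      ((0 : ℝ × ℝ →L[ℝ] ℝ) + ContinuousLinearMap.snd ℝ ℝ ℝ) p :=
    (hasFDerivAt_const (1:ℝ) p).add hasFDerivAt_snd
  have hinv := (hasFDerivAt_inv h).comp p h2
  have h1 : HasFDerivAt (fun q : ℝ × ℝ => q.1 + q.2)
      (ContinuousLinearMap.fst ℝ ℝ ℝ + ContinuousLinearMap.snd ℝ ℝ ℝ) p :=
    hasFDerivAt_fst.add hasFDerivAt_snd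
  have h3 : HasFDerivAt (fun q : ℝ × ℝ => 1 - q.1 - q.2)
      ((0 : ℝ × ℝ →L[ℝ] ℝ) - ContinuousLinearMap.fst ℝ ℝ ℝ - ContinuousLinearMap.snd ℝ ℝ ℝ) p :=
    ((hasFDerivAt_const (1:ℝ) p).sub hasFDerivAt_fst).sub hasFDerivAt_snd
  have H := (h1.mul hinv).prodMk (h3.mul hinv)
  have hg : g1 = fun q : ℝ × ℝ => ((q.1 + q.2) * (1 + q.2)⁻¹, (1 - q.1 - q.2) * (1 + q.2)⁻¹) := by
    funext q; simp [g1, div_eq_mul_inv]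
  rw [hg]
  refine H.congr_fderiv ?_
  apply ContinuousLinearMap.ext
  intro q
  rw [fder1, mk2_apply]
  simp [Prod.ext_iff, smul_eq_mul]
  constructor <;> field_simp <;> ring

lemma hasFDerivAt_g2 (p : ℝ × ℝ) (h : (1:ℝ) + p.2 ≠ 0) :
    HasFDerivAt g2 (fder2 p) p := by
  have h2 : HasFDerivAt (fun q : ℝ × ℝ => 1 + q.2)
      ((0 : ℝ × ℝ →L[ℝ] ℝ) + ContinuousLinearMap.snd ℝ ℝ ℝ) p :=
    (hasFDerivAt_const (1:ℝ) p).add hasFDerivAt_snd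
  have hinv := (hasFDerivAt_inv h).comp p h2
  have H := (hasFDerivAt_snd.mul hinv).prodMk (hasFDerivAt_fst.mul hinv)
  have hg : g2 = fun q : ℝ × ℝ => (q.2 * (1 + q.2)⁻¹, q.1 * (1 + q.2)⁻¹) := by
    funext q; simp [g2, div_eq_mul_inv]
  rw [hg]
  refine H.congr_fderiv ?_
  apply ContinuousLinearMap.ext
  intro q
  rw [fder2, mk2_apply]
  simp [Prod.ext_iff, smul_eq_mul]
  constructor <;> field_simp <;> ring

lemma measurableSet_simplexT : MeasurableSet simplexT := by
  have : simplexT = {p : ℝ × ℝ | 0 < p.1} ∩ {p | 0 < p.2} ∩ {p | p.1 + p.2 < 1} := by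
    ext p; simp [simplexT]; tauto
  rw [this]
  exact ((measurableSet_lt measurable_const measurable_fst).inter
    (measurableSet_lt measurable_const measurable_snd)).inter
    (measurableSet_lt (measurable_fst.add measurable_snd) measurable_const)

lemma measurable_casProj : Measurable casProj := by
  apply Measurable.ite
  · exact measurableSet_lt (by fun_prop) measurable_fst
  · fun_prop
  · fun_prop

lemma casMeasure_apply {t : Set (ℝ × ℝ)} (ht : MeasurableSet t) :
    casMeasure t = ∫⁻ p in t ∩ simplexT, casDen p := by
  rw [casMeasure, withDensity_apply _ ht, Measure.restrict_restrict ht]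
  rfl

lemma line_null : volume {p : ℝ × ℝ | p.1 = 1 - p.1 - p.2} = 0 := by
  have hset : {p : ℝ × ℝ | p.1 = 1 - p.1 - p.2} = {p : ℝ × ℝ | p.2 = 1 - 2 * p.1} := by
    ext p; constructor <;> intro h <;> simp only [mem_setOf_eq] at * <;> linarith
  rw [hset]
  have hm : MeasurableSet {p : ℝ × ℝ | p.2 = 1 - 2 * p.1} :=
    measurableSet_eq_fun measurable_snd (by fun_prop)
  rw [Measure.volume_eq_prod, Measure.measure_prod_null hm]
  refine Filter.Eventually.of_forall fun x => ?_
  have : (Prod.mk x ⁻¹' {p : ℝ × ℝ | p.2 = 1 - 2 * p.1}) = {1 - 2 * x} := by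
    ext y; simp
  simp only [this, Pi.zero_apply]
  exact measure_singleton _

lemma g1_image (s : Set (ℝ × ℝ)) :
    casProj ⁻¹' s ∩ (simplexT ∩ {p | 1 - p.1 - p.2 < p.1}) = g1 '' (s ∩ simplexT) := by
  ext p
  constructor
  · rintro ⟨hps, ⟨hx, hy, hxy⟩, hlt⟩
    simp only [mem_setOf_eq] at hlt
    have hxy0 : (0:ℝ) < p.1 + p.2 := by linarith
    have hne : p.1 + p.2 ≠ 0 := hxy0.ne'
    have hz : (0:ℝ) < 1 - p.1 - p.2 := by linarith
    have hc : casProj p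
        = ((p.1 - (1 - p.1 - p.2)) / (p.1 + p.2), (1 - p.1 - p.2) / (p.1 + p.2)) := by
      simp only [casProj, if_pos hlt]
    refine ⟨casProj p, ⟨hps, ?_⟩, ?_⟩
    · rw [hc]
      refine ⟨div_pos (by linarith) hxy0, div_pos hz hxy0, ?_⟩
      rw [← add_div, div_lt_one hxy0]
      linarith
    · rw [hc]
      simp only [g1]
      apply Prod.ext <;> (field_simp; try ring)
  · rintro ⟨q, ⟨hqs, hqx, hqy, hqxy⟩, rfl⟩
    have hw : (0:ℝ) < 1 + q.2 := by linarith
    have hwne : (1:ℝ) + q.2 ≠ 0 := hw.ne'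
    have hx' : (0:ℝ) < (q.1 + q.2) / (1 + q.2) := div_pos (by linarith) hw
    have hy' : (0:ℝ) < (1 - q.1 - q.2) / (1 + q.2) := div_pos (by linarith) hw
    have hsum : (g1 q).1 + (g1 q).2 = 1 / (1 + q.2) := by
      simp only [g1, ← add_div]; congr 1; ring
    have hsum1 : (g1 q).1 + (g1 q).2 < 1 := by
      rw [hsum, div_lt_one hw]; linarith
    have hlt : 1 - (g1 q).1 - (g1 q).2 < (g1 q).1 := by
      have h1 : 1 - (g1 q).1 - (g1 q).2 = 1 - 1/(1+q.2) := by rw [sub_sub, hsum]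
      rw [h1]
      show 1 - 1/(1+q.2) < (q.1 + q.2) / (1 + q.2)
      rw [sub_lt_iff_lt_add, ← add_div, lt_div_iff₀ hw]
      nlinarith
    refine ⟨?_, ⟨hx', hy', hsum1⟩, hlt⟩
    show casProj (g1 q) ∈ s
    have hc : casProj (g1 q)
        = (((g1 q).1 - (1 - (g1 q).1 - (g1 q).2)) / ((g1 q).1 + (g1 q).2),
            (1 - (g1 q).1 - (g1 q).2) / ((g1 q).1 + (g1 q).2)) := by
      simp only [casProj, if_pos hlt]
    have : casProj (g1 q) = q := by
      rw [hc]
      simp only [g1]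
      apply Prod.ext <;> (field_simp; try ring)
    rw [this]; exact hqs

lemma g2_image (s : Set (ℝ × ℝ)) :
    casProj ⁻¹' s ∩ (simplexT ∩ {p | p.1 < 1 - p.1 - p.2}) = g2 '' (s ∩ simplexT) := by
  ext p
  constructor
  · rintro ⟨hps, ⟨hx, hy, hxy⟩, hlt⟩
    simp only [mem_setOf_eq] at hlt
    have h1x : (0:ℝ) < 1 - p.1 := by linarith
    have hne : (1:ℝ) - p.1 ≠ 0 := h1x.ne'
    have hc : casProj p = (p.2 / (1 - p.1), p.1 / (1 - p.1)) := by
      simp only [casProj, if_neg (not_lt.2 hlt.le)]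
    refine ⟨casProj p, ⟨hps, ?_⟩, ?_⟩
    · rw [hc]
      refine ⟨div_pos hy h1x, div_pos hx h1x, ?_⟩
      rw [← add_div, div_lt_one h1x]
      linarith
    · rw [hc]
      simp only [g2]
      apply Prod.ext <;> (field_simp; try ring)
  · rintro ⟨q, ⟨hqs, hqx, hqy, hqxy⟩, rfl⟩
    have hw : (0:ℝ) < 1 + q.2 := by linarith
    have hwne : (1:ℝ) + q.2 ≠ 0 := hw.ne'
    have hx' : (0:ℝ) < (g2 q).1 := div_pos hqy hw
    have hy' : (0:ℝ) < (g2 q).2 := div_pos hqx hw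
    have hsum : (g2 q).1 + (g2 q).2 = (q.1 + q.2) / (1 + q.2) := by
      simp only [g2, ← add_div]; congr 1; ring
    have hsum1 : (g2 q).1 + (g2 q).2 < 1 := by
      rw [hsum, div_lt_one hw]; linarith
    have hlt : (g2 q).1 < 1 - (g2 q).1 - (g2 q).2 := by
      have h1 : 1 - (g2 q).1 - (g2 q).2 = 1 - (q.1+q.2)/(1+q.2) := by rw [sub_sub, hsum]
      rw [h1]
      show (q.2 : ℝ) / (1 + q.2) < 1 - (q.1 + q.2) / (1 + q.2)
      rw [lt_sub_iff_add_lt, ← add_div, div_lt_one hw]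
      linarith
    refine ⟨?_, ⟨hx', hy', hsum1⟩, hlt⟩
    show casProj (g2 q) ∈ s
    have hc : casProj (g2 q) = ((g2 q).2 / (1 - (g2 q).1), (g2 q).1 / (1 - (g2 q).1)) := by
      simp only [casProj, if_neg (not_lt.2 hlt.le)]
    have : casProj (g2 q) = q := by
      rw [hc]
      simp only [g2]
      apply Prod.ext <;> (field_simp; try ring)
    rw [this]; exact hqs

lemma g1_injOn : InjOn g1 {q : ℝ × ℝ | 0 < q.2} := by
  rintro q hq q' hq' h
  simp only [mem_setOf_eq] at hq hq'
  have hw : (0:ℝ) < 1 + q.2 := by linarith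
  have hw' : (0:ℝ) < 1 + q'.2 := by linarith
  rw [g1, g1, Prod.mk.injEq] at h
  obtain ⟨h1, h2⟩ := h
  have hsum : 1 / (1 + q.2) = 1 / (1 + q'.2) := by
    have := congrArg₂ (· + ·) h1 h2
    simp only [← add_div] at this
    have e1 : q.1 + q.2 + (1 - q.1 - q.2) = (1:ℝ) := by ring
    have e2 : q'.1 + q'.2 + (1 - q'.1 - q'.2) = (1:ℝ) := by ring
    rwa [e1, e2] at this
  have h2eq : q.2 = q'.2 := by
    field_simp at hsum; linarith
  have h1eq : q.1 = q'.1 := by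
    rw [h2eq] at h1
    field_simp at h1
    linarith
  exact Prod.ext h1eq h2eq

lemma g2_injOn : InjOn g2 {q : ℝ × ℝ | 0 < q.2} := by
  rintro q hq q' hq' h
  simp only [mem_setOf_eq] at hq hq'
  have hw : (0:ℝ) < 1 + q.2 := by linarith
  have hw' : (0:ℝ) < 1 + q'.2 := by linarith
  rw [g2, g2, Prod.mk.injEq] at h
  obtain ⟨h1, h2⟩ := h
  have h2eq : q.2 = q'.2 := by
    field_simp at h1
    nlinarith
  have h1eq : q.1 = q'.1 := by
    rw [h2eq] at h2
    field_simp at h2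
    linarith
  exact Prod.ext h1eq h2eq

/-- The measure with density `1/(2(1-x)(x+y))` (proportional to `1/((1-x)(1-z))`,
`z = 1-x-y`) on the unit simplex is invariant under the projective Cassaigne algorithm. -/
theorem stmt_11 : casMeasure.map casProj = casMeasure := by
  ext s hs
  rw [Measure.map_apply measurable_casProj hs, casMeasure_apply (measurable_casProj hs),
    casMeasure_apply hs]
  set A := casProj ⁻¹' s with hA
  have hAm : MeasurableSet A := measurable_casProj hs
  have hT1m : MeasurableSet (simplexT ∩ {p : ℝ × ℝ | 1 - p.1 - p.2 < p.1}) :=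
    measurableSet_simplexT.inter (measurableSet_lt (by fun_prop) measurable_fst)
  have hT2m : MeasurableSet (simplexT ∩ {p : ℝ × ℝ | p.1 < 1 - p.1 - p.2}) :=
    measurableSet_simplexT.inter (measurableSet_lt measurable_fst (by fun_prop))
  -- decompose the domain, up to a null line
  have hae : (A ∩ simplexT : Set (ℝ × ℝ)) =ᵐ[volume]
      (((A ∩ (simplexT ∩ {p | 1 - p.1 - p.2 < p.1}))
        ∪ (A ∩ (simplexT ∩ {p | p.1 < 1 - p.1 - p.2}))) : Set (ℝ × ℝ)) := by
    rw [MeasureTheory.ae_eq_set]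
    constructor
    · refine measure_mono_null ?_ line_null
      rintro p ⟨⟨hpA, hpT⟩, hnu⟩
      simp only [mem_setOf_eq]
      by_contra hne
      rcases lt_or_gt_of_ne hne with hlt | hgt
      · exact hnu (Or.inr ⟨hpA, hpT, hlt⟩)
      · exact hnu (Or.inl ⟨hpA, hpT, hgt⟩)
    · have hsub : ((A ∩ (simplexT ∩ {p | 1 - p.1 - p.2 < p.1}))
          ∪ (A ∩ (simplexT ∩ {p | p.1 < 1 - p.1 - p.2}))) ⊆ A ∩ simplexT := by
        rintro p (⟨h1, h2, _⟩ | ⟨h1, h2, _⟩) <;> exact ⟨h1, h2⟩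
      rw [diff_eq_empty.2 hsub]
      exact measure_empty
  rw [setLIntegral_congr hae]
  have hdisj : Disjoint ((A ∩ (simplexT ∩ {p : ℝ × ℝ | 1 - p.1 - p.2 < p.1}) : Set (ℝ × ℝ)))
      ((A ∩ (simplexT ∩ {p : ℝ × ℝ | p.1 < 1 - p.1 - p.2}) : Set (ℝ × ℝ))) := by
    rw [Set.disjoint_left]
    rintro p ⟨_, _, h1⟩ ⟨_, _, h2⟩
    simp only [mem_setOf_eq] at h1 h2
    linarith
  rw [lintegral_union (hAm.inter hT2m) hdisj]
  have hsTm : MeasurableSet (s ∩ simplexT) := hs.inter measurableSet_simplexT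
  have hsub : s ∩ simplexT ⊆ {q : ℝ × ℝ | 0 < q.2} := fun q hq => hq.2.2.1
  -- change of variables for each branch
  have hwnz : ∀ p ∈ s ∩ simplexT, (1:ℝ) + p.2 ≠ 0 := by
    intro p hp
    have : 0 < p.2 := hp.2.2.1
    linarith
  have cov1 : ∫⁻ p in g1 '' (s ∩ simplexT), casDen p
      = ∫⁻ p in s ∩ simplexT, ENNReal.ofReal |(fder1 p).det| * casDen (g1 p) :=
    lintegral_image_eq_lintegral_abs_det_fderiv_mul volume hsTm
      (fun p hp => (hasFDerivAt_g1 p (hwnz p hp)).hasFDerivWithinAt)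
      (g1_injOn.mono hsub) casDen
  have cov2 : ∫⁻ p in g2 '' (s ∩ simplexT), casDen p
      = ∫⁻ p in s ∩ simplexT, ENNReal.ofReal |(fder2 p).det| * casDen (g2 p) :=
    lintegral_image_eq_lintegral_abs_det_fderiv_mul volume hsTm
      (fun p hp => (hasFDerivAt_g2 p (hwnz p hp)).hasFDerivWithinAt)
      (g2_injOn.mono hsub) casDen
  rw [hA, g1_image s, g2_image s, cov1, cov2]
  have hmeas1 : Measurable (fun p : ℝ × ℝ => ENNReal.ofReal |(fder1 p).det| * casDen (g1 p)) := by
    simp only [fder1, mk2_det, casDen, g1]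
    fun_prop
  rw [← lintegral_add_left hmeas1]
  refine setLIntegral_congr_fun_ae hsTm (Filter.Eventually.of_forall fun p hp => ?_)
  obtain ⟨hps, hx, hy, hxy⟩ : p ∈ s ∧ 0 < p.1 ∧ 0 < p.2 ∧ p.1 + p.2 < 1 :=
    ⟨hp.1, hp.2.1, hp.2.2.1, hp.2.2.2⟩
  have hw : (0:ℝ) < 1 + p.2 := by linarith
  have hwne : (1:ℝ) + p.2 ≠ 0 := hw.ne'
  have h1u : (0:ℝ) < 1 - p.1 := by linarith
  have huv : (0:ℝ) < p.1 + p.2 := by linarith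
  have hdet1 : (fder1 p).det = -(1/(1+p.2)^3) := by
    rw [fder1, mk2_det]; field_simp; ring
  have hdet2 : (fder2 p).det = -(1/(1+p.2)^3) := by
    rw [fder2, mk2_det]; field_simp; try ring
  have habs : |(-(1/(1+p.2)^3) : ℝ)| = 1/(1+p.2)^3 := by
    rw [abs_neg, abs_of_pos (by positivity)]
  have e1 : (1:ℝ) - (g1 p).1 = (1 - p.1)/(1+p.2) := by
    show (1:ℝ) - (p.1 + p.2)/(1+p.2) = (1 - p.1)/(1+p.2)
    field_simp; ring
  have e2 : (g1 p).1 + (g1 p).2 = 1/(1+p.2) := by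
    show ((p.1 + p.2)/(1+p.2) + (1 - p.1 - p.2)/(1+p.2) : ℝ) = 1/(1+p.2)
    rw [← add_div]; congr 1; ring
  have e3 : (1:ℝ) - (g2 p).1 = 1/(1+p.2) := by
    show (1:ℝ) - p.2/(1+p.2) = 1/(1+p.2)
    field_simp; ring
  have e4 : (g2 p).1 + (g2 p).2 = (p.1 + p.2)/(1+p.2) := by
    show (p.2/(1+p.2) + p.1/(1+p.2) : ℝ) = (p.1 + p.2)/(1+p.2)
    rw [← add_div]; congr 1; ring
  simp only [casDen]
  rw [hdet1, hdet2, habs, e1, e2, e3, e4,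
    ← ENNReal.ofReal_mul (by positivity), ← ENNReal.ofReal_mul (by positivity),
    ← ENNReal.ofReal_add (by positivity) (by positivity)]
  congr 1
  field_simp
  ring
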